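/- arXiv:0904.4057 — 3 statements merged into one kernel-verified Lean document; each statement's English description precedes it below -/
import Mathlib

section
/- Let k ≥ 2 be an integer, δ ∈ (0,1), and R a real number with 1 ≤ R ≤ k, set D = ⌊k/R⌋ with D ≥ 2, and let Ω_R be the Robust Soliton distribution. Then the mean degree satisfies ∑_{d=1}^{k} d·Ω_R(d) ≤ 3 + ln k + ln(R/δ); in particular the average degree of an encoded packet under the Robust Soliton distribution is O(log(k/δ)). -/
/-- The Ideal Soliton distribution on `{1, …, k}`:
`Ω_I(1) = 1/k` and `Ω_I(d) = 1/(d(d−1))` for `d = 2, …, k`. -/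
noncomputable def idealSoliton (k d : ℕ) : ℝ :=
  if d = 1 then 1 / (k : ℝ) else 1 / ((d : ℝ) * ((d : ℝ) - 1))

/-- The function `τ` from the Robust Soliton construction: with `D = ⌊k/R⌋`,
`τ(d) = R/(dk)` for `1 ≤ d ≤ D−1`, `τ(D) = R·ln(R/δ)/k`, and `τ(d) = 0` for `D < d ≤ k`. -/
noncomputable def tauRS (k : ℕ) (R δ : ℝ) (d : ℕ) : ℝ :=
  if d < ⌊(k : ℝ) / R⌋₊ then R / ((d : ℝ) * (k : ℝ))
  else if d = ⌊(k : ℝ) / R⌋₊ then R * Real.log (R / δ) / (k : ℝ)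
  else 0

/-- The normalizing constant `β = ∑_{i=1}^{k} (τ(i) + Ω_I(i))`. -/
noncomputable def betaRS (k : ℕ) (R δ : ℝ) : ℝ :=
  ∑ i ∈ Finset.Icc 1 k, (tauRS k R δ i + idealSoliton k i)

/-- The Robust Soliton distribution `Ω_R(d) = (τ(d) + Ω_I(d))/β`. -/
noncomputable def robustSoliton (k : ℕ) (R δ : ℝ) (d : ℕ) : ℝ :=
  (tauRS k R δ d + idealSoliton k d) / betaRS k R δ

lemma tele (k : ℕ) (hk : 1 ≤ k) :
    ∑ d ∈ Finset.Icc 2 k, (1:ℝ)/((d:ℝ)*((d:ℝ)-1)) = 1 - 1/(k:ℝ) := by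
  induction k, hk using Nat.le_induction with
  | base => simp
  | succ n hn ih =>
    rw [Finset.sum_Icc_succ_top (by omega), ih]
    have h1 : (0:ℝ) < n := by exact_mod_cast hn
    have : ((n+1 : ℕ):ℝ) = (n:ℝ)+1 := by push_cast; ring
    rw [this]
    field_simp
    ring_nf; rw [mul_inv_cancel₀ h1.ne']; ring

lemma icc_eq (k : ℕ) (hk : 2 ≤ k) :
    Finset.Icc 1 k = insert 1 (Finset.Icc 2 k) := by
  ext d; simp [Finset.mem_Icc]; omega

lemma harm_le (m : ℕ) :
    ∑ d ∈ Finset.Icc 1 m, (1:ℝ)/(d:ℝ) ≤ 1 + Real.log m := by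
  have := harmonic_le_one_add_log m
  rw [harmonic_eq_sum_Icc] at this
  have h2 : ((∑ d ∈ Finset.Icc 1 m, (d:ℚ)⁻¹ : ℚ) : ℝ) = ∑ d ∈ Finset.Icc 1 m, (1:ℝ)/(d:ℝ) := by
    push_cast; simp [one_div]
  linarith [this, h2.le]

set_option maxHeartbeats 1000000 in
/-- Let `k ≥ 2` be an integer, `δ ∈ (0,1)`, and `R` real with `1 ≤ R ≤ k`,
set `D = ⌊k/R⌋` with `D ≥ 2`, and let `Ω_R` be the Robust Soliton distribution. Then the
mean degree satisfies `∑_{d=1}^{k} d·Ω_R(d) ≤ 3 + ln k + ln(R/δ)`. -/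
theorem robustSoliton_mean_le (k : ℕ) (hk : 2 ≤ k) (δ R : ℝ)
    (hδ : δ ∈ Set.Ioo (0 : ℝ) 1) (hR1 : 1 ≤ R) (hRk : R ≤ (k : ℝ))
    (hD : 2 ≤ ⌊(k : ℝ) / R⌋₊) :
    ∑ d ∈ Finset.Icc 1 k, (d : ℝ) * robustSoliton k R δ d
      ≤ 3 + Real.log (k : ℝ) + Real.log (R / δ) := by
  obtain ⟨hδ0, hδ1⟩ := hδ
  set D := ⌊(k : ℝ) / R⌋₊ with hDdef
  have hR0 : (0:ℝ) < R := lt_of_lt_of_le one_pos hR1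
  have hk0 : (0:ℝ) < (k:ℝ) := by positivity
  have hk0' : (2:ℝ) ≤ (k:ℝ) := by exact_mod_cast hk
  have hkR : (0:ℝ) ≤ (k:ℝ)/R := by positivity
  have hDfl : (D:ℝ) ≤ (k:ℝ)/R := Nat.floor_le hkR
  have hDR : (D:ℝ) * R ≤ (k:ℝ) := by
    calc (D:ℝ)*R ≤ ((k:ℝ)/R)*R := by nlinarith
    _ = k := div_mul_cancel₀ _ hR0.ne'
  have hDlek : D ≤ k := by
    have : (D:ℝ) ≤ (k:ℝ) := by nlinarith
    exact_mod_cast this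
  have hlog0 : 0 ≤ Real.log (R/δ) := Real.log_nonneg (by
    rw [le_div_iff₀ hδ0]; nlinarith)
  -- nonnegativity of tau
  have htau0 : ∀ d, 0 ≤ tauRS k R δ d := by
    intro d; unfold tauRS
    split_ifs with h1 h2
    · positivity
    · positivity
    · exact le_refl 0
  -- nonnegativity of ideal soliton on Icc 1 k
  have hIS0 : ∀ d ∈ Finset.Icc 1 k, 0 ≤ idealSoliton k d := by
    intro d hd
    rw [Finset.mem_Icc] at hd
    unfold idealSoliton
    split_ifs with h1
    · positivity
    · have : (2:ℝ) ≤ (d:ℝ) := by exact_mod_cast (by omega : 2 ≤ d)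
      have : (0:ℝ) < (d:ℝ)*((d:ℝ)-1) := by nlinarith
      positivity
  -- ideal soliton sums to 1
  have hISsum : ∑ d ∈ Finset.Icc 1 k, idealSoliton k d = 1 := by
    rw [icc_eq k hk, Finset.sum_insert (by simp)]
    have h1 : idealSoliton k 1 = 1/(k:ℝ) := by simp [idealSoliton]
    have h2 : ∑ d ∈ Finset.Icc 2 k, idealSoliton k d
        = ∑ d ∈ Finset.Icc 2 k, (1:ℝ)/((d:ℝ)*((d:ℝ)-1)) := by
      apply Finset.sum_congr rfl
      intro d hd
      rw [Finset.mem_Icc] at hd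
      simp only [idealSoliton, if_neg (show d ≠ 1 by omega)]
    rw [h1, h2, tele k (by omega)]
    ring
  -- beta ≥ 1
  have hbeta : 1 ≤ betaRS k R δ := by
    unfold betaRS
    rw [Finset.sum_add_distrib, ← hISsum]
    have : 0 ≤ ∑ i ∈ Finset.Icc 1 k, tauRS k R δ i :=
      Finset.sum_nonneg (fun i _ => htau0 i)
    linarith
  -- reduce to numerator
  have hnum0 : ∀ d ∈ Finset.Icc 1 k, 0 ≤ (d:ℝ) * (tauRS k R δ d + idealSoliton k d) := by
    intro d hd
    have := htau0 d
    have := hIS0 d hd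
    positivity
  have step1 : ∑ d ∈ Finset.Icc 1 k, (d : ℝ) * robustSoliton k R δ d
      ≤ ∑ d ∈ Finset.Icc 1 k, (d:ℝ) * (tauRS k R δ d + idealSoliton k d) := by
    apply Finset.sum_le_sum
    intro d hd
    unfold robustSoliton
    have h1 : 0 ≤ (d:ℝ) * (tauRS k R δ d + idealSoliton k d) := hnum0 d hd
    have hb0 : 0 < betaRS k R δ := lt_of_lt_of_le one_pos hbeta
    calc (d:ℝ) * ((tauRS k R δ d + idealSoliton k d) / betaRS k R δ)
        = ((d:ℝ) * (tauRS k R δ d + idealSoliton k d)) / betaRS k R δ := by ring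
      _ ≤ (d:ℝ) * (tauRS k R δ d + idealSoliton k d) := div_le_self h1 hbeta
  -- split sum
  have split : ∑ d ∈ Finset.Icc 1 k, (d:ℝ) * (tauRS k R δ d + idealSoliton k d)
      = ∑ d ∈ Finset.Icc 1 k, (d:ℝ) * tauRS k R δ d
        + ∑ d ∈ Finset.Icc 1 k, (d:ℝ) * idealSoliton k d := by
    rw [← Finset.sum_add_distrib]
    exact Finset.sum_congr rfl fun d _ => by ring
  rw [split] at step1
  -- Part A: ideal soliton part
  have hA : ∑ d ∈ Finset.Icc 1 k, (d:ℝ) * idealSoliton k d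
      ≤ 1/(k:ℝ) + 1 + Real.log k := by
    rw [icc_eq k hk, Finset.sum_insert (by simp)]
    have h1 : (1:ℕ) • idealSoliton k 1 = 1/(k:ℝ) := by simp [idealSoliton]
    have h2 : ∑ d ∈ Finset.Icc 2 k, (d:ℝ) * idealSoliton k d
        = ∑ d ∈ Finset.Icc 2 k, (1:ℝ)/((d:ℝ)-1) := by
      apply Finset.sum_congr rfl
      intro d hd
      rw [Finset.mem_Icc] at hd
      have hd2 : (2:ℝ) ≤ (d:ℝ) := by exact_mod_cast hd.1
      have hdne : (d:ℝ) ≠ 0 := by linarith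
      have hdne1 : (d:ℝ) - 1 ≠ 0 := by linarith
      have e : idealSoliton k d = 1 / ((d:ℝ) * ((d:ℝ)-1)) := by
        unfold idealSoliton; rw [if_neg (show d ≠ 1 by omega)]
      rw [e]; field_simp
    have h3 : ∑ d ∈ Finset.Icc 2 k, (1:ℝ)/((d:ℝ)-1)
        = ∑ j ∈ Finset.Icc 1 (k-1), (1:ℝ)/(j:ℝ) := by
      apply Finset.sum_nbij' (fun d => d - 1) (fun j => j + 1)
      · intro a ha; rw [Finset.mem_Icc] at *; omega
      · intro a ha; rw [Finset.mem_Icc] at *; omega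
      · intro a ha; rw [Finset.mem_Icc] at ha; omega
      · intro a ha; rw [Finset.mem_Icc] at ha; omega
      · intro a ha; rw [Finset.mem_Icc] at ha
        have : ((a - 1 : ℕ) : ℝ) = (a:ℝ) - 1 := by
          push_cast [Nat.cast_sub (by omega : 1 ≤ a)]; ring
        rw [this]
    have h4 : ∑ j ∈ Finset.Icc 1 (k-1), (1:ℝ)/(j:ℝ) ≤ 1 + Real.log (k-1:ℕ) :=
      harm_le (k-1)
    have h5 : Real.log ((k-1:ℕ):ℝ) ≤ Real.log k := by
      apply Real.log_le_log (by exact_mod_cast (by omega : 0 < k - 1))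
      exact_mod_cast Nat.sub_le k 1
    simp only [Nat.cast_one, one_mul]
    have : idealSoliton k 1 = 1/(k:ℝ) := by simp [idealSoliton]
    rw [this, h2, h3]
    linarith
  -- Part B: tau part
  have hB : ∑ d ∈ Finset.Icc 1 k, (d:ℝ) * tauRS k R δ d ≤ 1 + Real.log (R/δ) := by
    have hsub : ∑ d ∈ Finset.Icc 1 k, (d:ℝ) * tauRS k R δ d
        = ∑ d ∈ Finset.Icc 1 D, (d:ℝ) * tauRS k R δ d := by
      rw [Finset.sum_subset (Finset.Icc_subset_Icc_right hDlek)]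
      intro x hx hx2
      rw [Finset.mem_Icc] at hx hx2
      have : ¬ x < D := by omega
      have h2 : ¬ x = D := by omega
      simp [tauRS, ← hDdef, this, h2]
    obtain ⟨m, hm⟩ : ∃ m, D = m + 1 := ⟨D - 1, by omega⟩
    rw [hsub, hm, Finset.sum_Icc_succ_top (by omega : 1 ≤ m + 1)]
    have hm1 : 1 ≤ m := by omega
    have hconst : ∑ d ∈ Finset.Icc 1 m, (d:ℝ) * tauRS k R δ d
        = (m:ℝ) * (R / k) := by
      rw [Finset.sum_congr rfl (g := fun _ => R / (k:ℝ)) ?_]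
      · rw [Finset.sum_const, Nat.card_Icc]
        simp [nsmul_eq_mul]
      · intro d hd
        rw [Finset.mem_Icc] at hd
        have hlt : d < ⌊(k:ℝ)/R⌋₊ := by rw [← hDdef, hm]; omega
        have hdne : (d:ℝ) ≠ 0 := by
          exact_mod_cast (by omega : d ≠ 0)
        rw [show tauRS k R δ d = R / ((d:ℝ) * k) by
          simp [tauRS, hlt]]
        field_simp
    have he : m + 1 = ⌊(k:ℝ)/R⌋₊ := by rw [← hDdef, hm]
    have htop : tauRS k R δ (m+1) = R * Real.log (R/δ) / k := by
      simp [tauRS, ← he]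
    rw [hconst, htop]
    have hmD : (m:ℝ) ≤ ((m+1:ℕ):ℝ) := by push_cast; linarith
    have hmR : (m:ℝ) * R ≤ (k:ℝ) := by
      have : ((m+1:ℕ):ℝ) * R ≤ (k:ℝ) := by rw [← hm]; exact hDR
      nlinarith
    have hb1 : (m:ℝ) * (R / k) ≤ 1 := by
      rw [show (m:ℝ) * (R / k) = (m:ℝ) * R / k by ring, div_le_one hk0]
      linarith [hmR]
    have hb2 : ((m+1:ℕ):ℝ) * (R * Real.log (R/δ) / k) ≤ Real.log (R/δ) := by
      rw [mul_div_assoc']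
      rw [div_le_iff₀ hk0]
      have : ((m+1:ℕ):ℝ) * R ≤ (k:ℝ) := by rw [← hm]; exact hDR
      nlinarith
    linarith
  have h1k : 1/(k:ℝ) ≤ 1 := by
    rw [div_le_one hk0]; linarith
  linarith
end

section
/- Fix δ ∈ (0,1) and c₀ > 0, and for each integer k ≥ 2 let R = c₀·ln(k/δ)·√k, D = ⌊k/R⌋, and let Ω_R be the Robust Soliton distribution. Then there exists an integer K₀ such that for all k ≥ K₀, the probability that a node stores no information satisfies Ω′(0) = ∑_{d=1}^{k} (1 − d/k)^k·Ω_R(d) > 1/(2e²). -/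
open Filter Finset in
lemma rs_telescope (k : ℕ) (hk : 1 ≤ k) :
    ∑ i ∈ Finset.Icc 2 k, (1 : ℝ) / ((i : ℝ) * ((i : ℝ) - 1)) = 1 - 1 / (k : ℝ) := by
  induction k, hk using Nat.le_induction with
  | base => simp
  | succ n hn ih =>
    rw [Finset.sum_Icc_succ_top (by omega), ih]
    have h1 : (1 : ℝ) ≤ (n : ℝ) := by exact_mod_cast hn
    have h2 : (n : ℝ) ≠ 0 := by linarith
    have h3 : (n : ℝ) + 1 ≠ 0 := by linarith
    push_cast
    field_simp
    ring_nf
    simp [h2]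

lemma rs_idealSum (k : ℕ) (hk : 1 ≤ k) :
    ∑ i ∈ Finset.Icc 1 k, idealSoliton k i = 1 := by
  have hins : Finset.Icc 1 k = insert 1 (Finset.Icc 2 k) := by
    ext x; simp [Finset.mem_Icc, Finset.mem_insert]; omega
  rw [hins, Finset.sum_insert (by simp)]
  have h1 : idealSoliton k 1 = 1 / (k : ℝ) := by simp [idealSoliton]
  have h2 : ∑ i ∈ Finset.Icc 2 k, idealSoliton k i
      = ∑ i ∈ Finset.Icc 2 k, (1 : ℝ) / ((i : ℝ) * ((i : ℝ) - 1)) := by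
    apply Finset.sum_congr rfl
    intro i hi
    have : i ≠ 1 := by have := (Finset.mem_Icc.mp hi).1; omega
    simp [idealSoliton, this]
  rw [h1, h2, rs_telescope k hk]
  ring

open Filter in
lemma rs_tendsto_aux (p q r : ℝ) :
    Tendsto (fun y : ℝ => (p * Real.log y ^ 2 + q * Real.log y + r) / y)
      atTop (nhds 0) := by
  have h2 := Real.tendsto_pow_log_div_mul_add_atTop 1 0 2 one_ne_zero
  have h1 := Real.tendsto_pow_log_div_mul_add_atTop 1 0 1 one_ne_zero
  have h0 : Tendsto (fun y : ℝ => 1 / y) atTop (nhds 0) := by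
    simpa [one_div] using (tendsto_inv_atTop_zero : Tendsto (fun y : ℝ => y⁻¹) atTop (nhds 0))
  have h := ((h2.const_mul p).add (h1.const_mul q)).add (h0.const_mul r)
  simp only [mul_zero, add_zero] at h
  refine h.congr fun y => ?_
  simp only [one_mul, add_zero, pow_one]
  ring

open Filter in
lemma rs_sqrt_tendsto : Tendsto (fun k : ℕ => Real.sqrt (k : ℝ)) atTop atTop :=
  ((tendsto_rpow_atTop one_half_pos).congr
    (fun x => (Real.sqrt_eq_rpow x).symm)).comp tendsto_natCast_atTop_atTop

/-- Fix `δ ∈ (0,1)` and `c₀ > 0`, and for each integer `k ≥ 2` let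
`R = c₀·ln(k/δ)·√k`, `D = ⌊k/R⌋`, and let `Ω_R` be the Robust Soliton distribution.
Then there exists an integer `K₀` such that for all `k ≥ K₀`, the probability that a node
stores no information satisfies `Ω′(0) = ∑_{d=1}^{k} (1 − d/k)^k·Ω_R(d) > 1/(2e²)`. -/
theorem robustSoliton_store_nothing_gt (δ c₀ : ℝ) (hδ : δ ∈ Set.Ioo (0 : ℝ) 1)
    (hc₀ : 0 < c₀) :
    ∃ K₀ : ℕ, 2 ≤ K₀ ∧ ∀ k : ℕ, K₀ ≤ k →
      ∑ d ∈ Finset.Icc 1 k, (1 - (d : ℝ) / (k : ℝ)) ^ k *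
          robustSoliton k (c₀ * Real.log ((k : ℝ) / δ) * Real.sqrt (k : ℝ)) δ d
        > 1 / (2 * Real.exp 2) := by
  classical
  obtain ⟨hδ0, hδ1⟩ := hδ
  set a : ℝ := Real.log δ with ha
  set R : ℕ → ℝ := fun k => c₀ * Real.log ((k : ℝ) / δ) * Real.sqrt (k : ℝ) with hRdef
  have hlogdiv : ∀ k : ℕ, 1 ≤ k → Real.log ((k : ℝ) / δ) = Real.log (k : ℝ) - a := by
    intro k hk
    exact Real.log_div (Nat.cast_ne_zero.mpr (by omega)) (ne_of_gt hδ0)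
  -- R tends to infinity
  have hRtop : Filter.Tendsto R Filter.atTop Filter.atTop := by
    have h1 : Filter.Tendsto (fun k : ℕ => Real.log (k : ℝ) - a) Filter.atTop Filter.atTop := by
      exact Filter.tendsto_atTop_add_const_right _ (-a)
        (Real.tendsto_log_atTop.comp tendsto_natCast_atTop_atTop)
    have h2 : Filter.Tendsto (fun k : ℕ => c₀ * (Real.log (k : ℝ) - a)) Filter.atTop Filter.atTop :=
      h1.const_mul_atTop hc₀
    refine (h2.atTop_mul_atTop₀ rs_sqrt_tendsto).congr' ?_
    filter_upwards [Filter.eventually_ge_atTop 1] with k hk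
    rw [hRdef]
    simp only
    rw [hlogdiv k hk]
  have hR1 : ∀ᶠ k : ℕ in Filter.atTop, 1 ≤ R k := hRtop.eventually_ge_atTop 1
  -- R k / k → 0
  have hRk0 : Filter.Tendsto (fun k : ℕ => R k / (k : ℝ)) Filter.atTop (nhds 0) := by
    refine ((rs_tendsto_aux 0 (2 * c₀) (-(c₀ * a))).comp rs_sqrt_tendsto).congr' ?_
    filter_upwards [Filter.eventually_ge_atTop 1] with k hk
    have hk0 : (0 : ℝ) < (k : ℝ) := by exact_mod_cast Nat.lt_of_lt_of_le Nat.zero_lt_one hk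
    have hs0 : Real.sqrt (k : ℝ) ≠ 0 := by positivity
    have hks : (k : ℝ) = Real.sqrt (k : ℝ) * Real.sqrt (k : ℝ) :=
      (Real.mul_self_sqrt hk0.le).symm
    simp only [Function.comp]
    rw [Real.log_sqrt hk0.le, hRdef]
    simp only
    rw [hlogdiv k hk]
    field_simp
    linear_combination (4 * c₀ * Real.log (k : ℝ) - 4 * c₀ * a) * hks
  have hRlek : ∀ᶠ k : ℕ in Filter.atTop, R k ≤ (k : ℝ) := by
    have h1 : ∀ᶠ k : ℕ in Filter.atTop, R k / (k : ℝ) ≤ 1 :=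
      hRk0.eventually (eventually_le_nhds one_pos)
    filter_upwards [h1, Filter.eventually_ge_atTop 1] with k hk1 hk2
    have hk0 : (0 : ℝ) < (k : ℝ) := by exact_mod_cast Nat.lt_of_lt_of_le Nat.zero_lt_one hk2
    exact (div_le_one hk0).mp hk1
  -- tau is nonnegative
  have htau : ∀ᶠ k : ℕ in Filter.atTop, ∀ i : ℕ, 0 ≤ tauRS k (R k) δ i := by
    filter_upwards [hR1] with k hk i
    have hR0 : (0 : ℝ) ≤ R k := le_trans zero_le_one hk
    unfold tauRS
    split_ifs with h1 h2
    · positivity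
    · apply div_nonneg _ (Nat.cast_nonneg k)
      apply mul_nonneg hR0
      apply Real.log_nonneg
      rw [le_div_iff₀ hδ0, one_mul]
      linarith
    · exact le_refl 0
  set S : ℕ → ℝ := fun k => ∑ i ∈ Finset.Icc 1 k, tauRS k (R k) δ i with hSdef
  have hS0 : ∀ᶠ k : ℕ in Filter.atTop, 0 ≤ S k := by
    filter_upwards [htau] with k hk
    exact Finset.sum_nonneg fun i _ => hk i
  -- upper bound for S
  have hSle : ∀ᶠ k : ℕ in Filter.atTop,
      S k ≤ R k / (k : ℝ) * (1 + Real.log (k : ℝ))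
            + R k * (Real.log (k : ℝ) - a) / (k : ℝ) := by
    filter_upwards [hR1, hRlek, Filter.eventually_ge_atTop 1] with k hk1 hklek hk
    have hk0 : (0 : ℝ) < (k : ℝ) := by exact_mod_cast Nat.lt_of_lt_of_le Nat.zero_lt_one hk
    have hR0 : (0 : ℝ) < R k := lt_of_lt_of_le one_pos hk1
    have hlogR : 0 ≤ Real.log (R k / δ) := by
      apply Real.log_nonneg
      rw [le_div_iff₀ hδ0, one_mul]
      linarith
    set Dk := ⌊(k : ℝ) / R k⌋₊ with hDk
    have step1 : S k ≤ ∑ i ∈ Finset.Icc 1 k,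
        (R k / ((i : ℝ) * (k : ℝ))
          + if i = Dk then R k * Real.log (R k / δ) / (k : ℝ) else 0) := by
      apply Finset.sum_le_sum
      intro i hi
      have hi1 : 1 ≤ i := (Finset.mem_Icc.mp hi).1
      have hipos : (0 : ℝ) < (i : ℝ) := by exact_mod_cast Nat.lt_of_lt_of_le Nat.zero_lt_one hi1
      have hnn : (0 : ℝ) ≤ R k / ((i : ℝ) * (k : ℝ)) := by positivity
      unfold tauRS
      rw [← hDk]
      by_cases h1 : i < Dk
      · rw [if_pos h1, if_neg (ne_of_lt h1)]
        simp
      · rw [if_neg h1]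
        by_cases h2 : i = Dk
        · rw [if_pos h2]
          linarith
        · rw [if_neg h2]
          simpa using hnn
    have step2 : ∑ i ∈ Finset.Icc 1 k,
        (if i = Dk then R k * Real.log (R k / δ) / (k : ℝ) else 0)
          ≤ R k * Real.log (R k / δ) / (k : ℝ) := by
      rw [Finset.sum_ite_eq' (Finset.Icc 1 k) Dk (fun _ => R k * Real.log (R k / δ) / (k : ℝ))]
      split_ifs
      · exact le_refl _
      · positivity
    have step3 : ∑ i ∈ Finset.Icc 1 k, R k / ((i : ℝ) * (k : ℝ))
        = R k / (k : ℝ) * ∑ i ∈ Finset.Icc 1 k, ((i : ℝ))⁻¹ := by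
      rw [Finset.mul_sum]
      apply Finset.sum_congr rfl
      intro i hi
      rw [mul_comm ((i : ℝ)) ((k : ℝ)), ← div_div, div_eq_mul_inv]
    have step4 : ∑ i ∈ Finset.Icc 1 k, ((i : ℝ))⁻¹ = ((harmonic k : ℚ) : ℝ) := by
      rw [harmonic_eq_sum_Icc]
      push_cast
      rfl
    have step5 : ((harmonic k : ℚ) : ℝ) ≤ 1 + Real.log (k : ℝ) := harmonic_le_one_add_log k
    have step6 : R k / (k : ℝ) * ∑ i ∈ Finset.Icc 1 k, ((i : ℝ))⁻¹
        ≤ R k / (k : ℝ) * (1 + Real.log (k : ℝ)) := by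
      rw [step4]
      apply mul_le_mul_of_nonneg_left step5 (by positivity)
    have step7 : R k * Real.log (R k / δ) / (k : ℝ) ≤ R k * (Real.log (k : ℝ) - a) / (k : ℝ) := by
      have h : Real.log (R k / δ) ≤ Real.log (k : ℝ) - a := by
        rw [Real.log_div (ne_of_gt hR0) (ne_of_gt hδ0)]
        have := Real.log_le_log hR0 hklek
        linarith
      gcongr
    calc S k ≤ _ := step1
      _ = (∑ i ∈ Finset.Icc 1 k, R k / ((i : ℝ) * (k : ℝ)))
            + ∑ i ∈ Finset.Icc 1 k,
                (if i = Dk then R k * Real.log (R k / δ) / (k : ℝ) else 0) :=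
        Finset.sum_add_distrib
      _ ≤ R k / (k : ℝ) * (1 + Real.log (k : ℝ)) + R k * (Real.log (k : ℝ) - a) / (k : ℝ) := by
        rw [step3]
        exact add_le_add step6 (step2.trans step7)
  -- the upper bound tends to 0
  have hhtend : Filter.Tendsto
      (fun k : ℕ => R k / (k : ℝ) * (1 + Real.log (k : ℝ))
        + R k * (Real.log (k : ℝ) - a) / (k : ℝ)) Filter.atTop (nhds 0) := by
    refine ((rs_tendsto_aux (8 * c₀) (c₀ * (2 - 6 * a)) (c₀ * (a ^ 2 - a))).comp
      rs_sqrt_tendsto).congr' ?_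
    filter_upwards [Filter.eventually_ge_atTop 1] with k hk
    have hk0 : (0 : ℝ) < (k : ℝ) := by exact_mod_cast Nat.lt_of_lt_of_le Nat.zero_lt_one hk
    have hs0 : Real.sqrt (k : ℝ) ≠ 0 := by positivity
    have hks : (k : ℝ) = Real.sqrt (k : ℝ) * Real.sqrt (k : ℝ) :=
      (Real.mul_self_sqrt hk0.le).symm
    simp only [Function.comp]
    rw [Real.log_sqrt hk0.le, hRdef]
    simp only
    rw [hlogdiv k hk]
    set L := Real.log (k : ℝ) with hLdef
    set y := Real.sqrt (k : ℝ) with hy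
    rw [hks]
    have hy0 : y ≠ 0 := hs0
    field_simp
    ring
  have hStend : Filter.Tendsto S Filter.atTop (nhds 0) := squeeze_zero' hS0 hSle hhtend
  -- betaRS tends to 1
  have hbeta_eq : ∀ᶠ k : ℕ in Filter.atTop, betaRS k (R k) δ = 1 + S k := by
    filter_upwards [Filter.eventually_ge_atTop 1] with k hk
    unfold betaRS
    rw [Finset.sum_add_distrib, rs_idealSum k hk, hSdef]
    ring
  have hbtend : Filter.Tendsto (fun k : ℕ => betaRS k (R k) δ) Filter.atTop (nhds 1) := by
    have h : Filter.Tendsto (fun k : ℕ => 1 + S k) Filter.atTop (nhds (1 + 0)) :=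
      tendsto_const_nhds.add hStend
    rw [add_zero] at h
    exact h.congr' (hbeta_eq.mono fun k hx => hx.symm)
  -- the comparison function F
  set F : ℕ → ℝ := fun k =>
    ((1 + (-2) / (k : ℝ)) ^ k * (1 / 2) + (1 + (-3) / (k : ℝ)) ^ k * (1 / 6))
      / betaRS k (R k) δ with hFdef
  have hFtend : Filter.Tendsto F Filter.atTop
      (nhds ((Real.exp (-2) * (1 / 2) + Real.exp (-3) * (1 / 6)) / 1)) :=
    (((Real.tendsto_one_add_div_pow_exp (-2)).mul_const (1 / 2)).add
      ((Real.tendsto_one_add_div_pow_exp (-3)).mul_const (1 / 6))).div hbtend one_ne_zero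
  have hL : 1 / (2 * Real.exp 2) < (Real.exp (-2) * (1 / 2) + Real.exp (-3) * (1 / 6)) / 1 := by
    rw [div_one, Real.exp_neg, Real.exp_neg]
    have h2 : (0 : ℝ) < Real.exp 2 := Real.exp_pos 2
    have h3 : (0 : ℝ) < Real.exp 3 := Real.exp_pos 3
    have heq : (Real.exp 2)⁻¹ * (1 / 2) = 1 / (2 * Real.exp 2) := by
      field_simp
    have hpos : (0 : ℝ) < (Real.exp 3)⁻¹ * (1 / 6) := by positivity
    linarith
  have hFev : ∀ᶠ k : ℕ in Filter.atTop, 1 / (2 * Real.exp 2) < F k :=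
    hFtend.eventually (eventually_gt_nhds hL)
  -- the sum dominates F eventually
  have hmain : ∀ᶠ k : ℕ in Filter.atTop,
      F k ≤ ∑ d ∈ Finset.Icc 1 k, (1 - (d : ℝ) / (k : ℝ)) ^ k * robustSoliton k (R k) δ d := by
    filter_upwards [htau, hS0, hbeta_eq, Filter.eventually_ge_atTop 3] with k htk hS0k hbk hk3
    have hk0 : (0 : ℝ) < (k : ℝ) := by exact_mod_cast Nat.lt_of_lt_of_le (by norm_num) hk3
    have hb1 : (1 : ℝ) ≤ betaRS k (R k) δ := by rw [hbk]; linarith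
    have hbpos : (0 : ℝ) < betaRS k (R k) δ := lt_of_lt_of_le one_pos hb1
    have hterm : ∀ d ∈ Finset.Icc 1 k,
        0 ≤ (1 - (d : ℝ) / (k : ℝ)) ^ k * robustSoliton k (R k) δ d := by
      intro d hd
      obtain ⟨hd1, hdk⟩ := Finset.mem_Icc.mp hd
      have hdk' : (d : ℝ) ≤ (k : ℝ) := by exact_mod_cast hdk
      have h1 : (0 : ℝ) ≤ 1 - (d : ℝ) / (k : ℝ) := by
        rw [sub_nonneg, div_le_one hk0]; exact hdk'
      apply mul_nonneg (pow_nonneg h1 k)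
      apply div_nonneg _ hbpos.le
      apply add_nonneg (htk d)
      unfold idealSoliton
      split_ifs with h
      · positivity
      · have hd2 : 2 ≤ d := by omega
        have : (2 : ℝ) ≤ (d : ℝ) := by exact_mod_cast hd2
        apply div_nonneg zero_le_one
        nlinarith
    have hsub : ({2, 3} : Finset ℕ) ⊆ Finset.Icc 1 k := by
      intro x hx
      simp only [Finset.mem_insert, Finset.mem_singleton] at hx
      rw [Finset.mem_Icc]
      omega
    have h23 : ∑ d ∈ ({2, 3} : Finset ℕ), (1 - (d : ℝ) / (k : ℝ)) ^ k * robustSoliton k (R k) δ d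
        ≤ ∑ d ∈ Finset.Icc 1 k, (1 - (d : ℝ) / (k : ℝ)) ^ k * robustSoliton k (R k) δ d :=
      Finset.sum_le_sum_of_subset_of_nonneg hsub (fun i hi _ => hterm i hi)
    refine le_trans ?_ h23
    rw [show ({2, 3} : Finset ℕ) = insert 2 {3} from rfl,
      Finset.sum_insert (by norm_num), Finset.sum_singleton]
    have hpow2 : (0 : ℝ) ≤ (1 - (2 : ℝ) / (k : ℝ)) ^ k := by
      apply pow_nonneg
      rw [sub_nonneg, div_le_one hk0]
      exact_mod_cast le_trans (by norm_num) hk3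
    have hpow3 : (0 : ℝ) ≤ (1 - (3 : ℝ) / (k : ℝ)) ^ k := by
      apply pow_nonneg
      rw [sub_nonneg, div_le_one hk0]
      exact_mod_cast hk3
    have hid2 : idealSoliton k 2 = 1 / 2 := by norm_num [idealSoliton]
    have hid3 : idealSoliton k 3 = 1 / 6 := by norm_num [idealSoliton]
    have ht2 : (1 - (2 : ℝ) / (k : ℝ)) ^ k * ((1 / 2) / betaRS k (R k) δ)
        ≤ (1 - (2 : ℝ) / (k : ℝ)) ^ k * robustSoliton k (R k) δ 2 := by
      apply mul_le_mul_of_nonneg_left _ hpow2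
      unfold robustSoliton
      rw [hid2]
      gcongr
      linarith [htk 2]
    have ht3 : (1 - (3 : ℝ) / (k : ℝ)) ^ k * ((1 / 6) / betaRS k (R k) δ)
        ≤ (1 - (3 : ℝ) / (k : ℝ)) ^ k * robustSoliton k (R k) δ 3 := by
      apply mul_le_mul_of_nonneg_left _ hpow3
      unfold robustSoliton
      rw [hid3]
      gcongr
      linarith [htk 3]
    have hexpand : F k
        = (1 - (2 : ℝ) / (k : ℝ)) ^ k * ((1 / 2) / betaRS k (R k) δ)
          + (1 - (3 : ℝ) / (k : ℝ)) ^ k * ((1 / 6) / betaRS k (R k) δ) := by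
      rw [hFdef]
      simp only
      have e2 : (1 : ℝ) + (-2) / (k : ℝ) = 1 - 2 / (k : ℝ) := by ring
      have e3 : (1 : ℝ) + (-3) / (k : ℝ) = 1 - 3 / (k : ℝ) := by ring
      rw [e2, e3]
      field_simp
    rw [hexpand]
    push_cast
    exact add_le_add ht2 ht3
  -- conclusion
  have hcomb := hFev.and hmain
  rw [Filter.eventually_atTop] at hcomb
  obtain ⟨K, hK⟩ := hcomb
  refine ⟨max K 2, le_max_right _ _, fun k hk => ?_⟩
  obtain ⟨h1, h2⟩ := hK k (le_trans (le_max_left _ _) hk)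
  exact lt_of_lt_of_le h1 h2
end

section
/- Fix δ ∈ (0,1) and c₀ > 0, and for each integer k ≥ 2 let R = c₀·ln(k/δ)·√k, D = ⌊k/R⌋, and let Ω_R be the Robust Soliton distribution. Then there exists an integer K₀ such that for all k ≥ K₀, the probability that a node stores an encoded packet of degree one satisfies Ω′(1) = ∑_{d=1}^{k} d·(1 − d/k)^{k−1}·Ω_R(d) ≥ R/(4k). -/
section AuxLemmas

open Filter Real

set_option maxHeartbeats 1000000

private lemma tele_sum : ∀ k : ℕ, 1 ≤ k →
    ∑ i ∈ Finset.Icc 2 k, (1:ℝ) / ((i:ℝ) * ((i:ℝ) - 1)) = 1 - 1/(k:ℝ) := by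
  intro k hk
  induction k with
  | zero => omega
  | succ n ih =>
    by_cases hn : n = 0
    · subst hn; norm_num
    · have hn1 : 1 ≤ n := Nat.one_le_iff_ne_zero.mpr hn
      rw [Finset.sum_Icc_succ_top (by omega : 2 ≤ n+1), ih hn1]
      have h0 : (n:ℝ) ≠ 0 := Nat.cast_ne_zero.mpr hn
      have h1 : (n:ℝ) + 1 ≠ 0 := by positivity
      push_cast
      field_simp
      ring_nf; simp [h0]


private lemma idealSoliton_sum {k : ℕ} (hk : 1 ≤ k) :
    ∑ i ∈ Finset.Icc 1 k, idealSoliton k i = 1 := by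
  have hins : Finset.Icc 1 k = insert 1 (Finset.Icc 2 k) := by
    ext x; simp only [Finset.mem_Icc, Finset.mem_insert]; omega
  rw [hins, Finset.sum_insert (by simp)]
  have h2 : ∀ i ∈ Finset.Icc 2 k, idealSoliton k i = 1/((i:ℝ)*((i:ℝ)-1)) := by
    intro i hi
    simp only [Finset.mem_Icc] at hi
    rw [idealSoliton, if_neg (show i ≠ 1 by omega)]
  rw [Finset.sum_congr rfl h2, tele_sum k hk]
  simp [idealSoliton]

private lemma log_sq_div_sqrt_tendsto {δ : ℝ} (hδ : 0 < δ) :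
    Tendsto (fun k : ℕ => Real.log ((k:ℝ)/δ)^2 / Real.sqrt k) atTop (nhds 0) := by
  have hsq : Tendsto (fun k : ℕ => Real.sqrt (k:ℝ)) atTop atTop := by
    have := (tendsto_rpow_atTop (by norm_num : (0:ℝ) < 1/2)).comp tendsto_natCast_atTop_atTop
    refine this.congr fun k => ?_
    rw [Function.comp_apply, ← Real.sqrt_eq_rpow]
  have A : ∀ n : ℕ, Tendsto (fun k : ℕ => Real.log (Real.sqrt (k:ℝ)) ^ n / Real.sqrt (k:ℝ)) atTop (nhds 0) := by
    intro n
    have := (Real.tendsto_pow_log_div_mul_add_atTop 1 0 n one_ne_zero).comp hsq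
    simpa [Function.comp_def] using this
  have key := (((A 2).const_mul 4).sub ((A 1).const_mul (4 * Real.log δ))).add
      ((A 0).const_mul (Real.log δ^2))
  norm_num at key
  refine key.congr' ?_
  filter_upwards [Filter.eventually_gt_atTop 0] with k hk
  have hk0 : (0:ℝ) < (k:ℝ) := by exact_mod_cast hk
  have hs : 0 < Real.sqrt (k:ℝ) := Real.sqrt_pos.mpr hk0
  have hlog : Real.log ((k:ℝ)/δ) = 2 * Real.log (Real.sqrt (k:ℝ)) - Real.log δ := by
    rw [Real.log_div (ne_of_gt hk0) (ne_of_gt hδ), Real.log_sqrt hk0.le]; ring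
  rw [hlog]
  field_simp
  ring

end AuxLemmas

open Filter Real

set_option maxHeartbeats 1000000 in
/-- Fix `δ ∈ (0,1)` and `c₀ > 0`, and for each integer `k ≥ 2` let
`R = c₀·ln(k/δ)·√k`, `D = ⌊k/R⌋`, and let `Ω_R` be the Robust Soliton distribution.
Then there exists an integer `K₀` such that for all `k ≥ K₀`, the probability that a node
stores an encoded packet of degree one satisfies
`Ω′(1) = ∑_{d=1}^{k} d·(1 − d/k)^{k−1}·Ω_R(d) ≥ R/(4k)`. -/
theorem robustSoliton_degree_one_ge (δ c₀ : ℝ) (hδ : δ ∈ Set.Ioo (0 : ℝ) 1)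
    (hc₀ : 0 < c₀) :
    ∃ K₀ : ℕ, 2 ≤ K₀ ∧ ∀ k : ℕ, K₀ ≤ k →
      ∑ d ∈ Finset.Icc 1 k, (d : ℝ) * (1 - (d : ℝ) / (k : ℝ)) ^ (k - 1) *
          robustSoliton k (c₀ * Real.log ((k : ℝ) / δ) * Real.sqrt (k : ℝ)) δ d
        ≥ c₀ * Real.log ((k : ℝ) / δ) * Real.sqrt (k : ℝ) / (4 * (k : ℝ)) := by
  obtain ⟨hδ0, hδ1⟩ := hδ
  -- eventual facts
  have hsqT : Tendsto (fun k : ℕ => Real.sqrt (k:ℝ)) atTop atTop := by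
    have := (tendsto_rpow_atTop (by norm_num : (0:ℝ) < 1/2)).comp
      (tendsto_natCast_atTop_atTop (R := ℝ))
    refine this.congr fun k => ?_
    rw [Function.comp_apply, ← Real.sqrt_eq_rpow]
  have hlogT : Tendsto (fun k : ℕ => Real.log ((k:ℝ)/δ)) atTop atTop :=
    Real.tendsto_log_atTop.comp ((tendsto_natCast_atTop_atTop (R := ℝ)).atTop_div_const hδ0)
  have hE : ∀ᶠ k : ℕ in atTop, 4 ≤ k ∧ 1 ≤ Real.log ((k:ℝ)/δ) ∧
      1 ≤ c₀ * Real.sqrt (k:ℝ) ∧ c₀ * Real.log ((k:ℝ)/δ)^2 / Real.sqrt (k:ℝ) ≤ 1/75 := by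
    have e1 : ∀ᶠ k : ℕ in atTop, 4 ≤ k := eventually_ge_atTop 4
    have e2 := hlogT.eventually_ge_atTop 1
    have e3 := (hsqT.const_mul_atTop hc₀).eventually_ge_atTop 1
    have e4 : ∀ᶠ k : ℕ in atTop, c₀ * Real.log ((k:ℝ)/δ)^2 / Real.sqrt (k:ℝ) ≤ 1/75 := by
      have := ((log_sq_div_sqrt_tendsto hδ0).const_mul c₀).eventually
        (eventually_le_nhds (show c₀ * 0 < 1/75 by norm_num))
      filter_upwards [this] with k hk
      calc c₀ * Real.log ((k:ℝ)/δ)^2 / Real.sqrt (k:ℝ)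
          = c₀ * (Real.log ((k:ℝ)/δ)^2 / Real.sqrt (k:ℝ)) := by ring
        _ ≤ 1/75 := hk
    filter_upwards [e1, e2, e3, e4] with k h1 h2 h3 h4 using ⟨h1, h2, h3, h4⟩
  obtain ⟨K₁, hK₁⟩ := eventually_atTop.mp hE
  refine ⟨max K₁ 2, le_max_right _ _, ?_⟩
  intro k hk
  obtain ⟨hk4, hL1, hcs, hsmall⟩ := hK₁ k (le_trans (le_max_left _ _) hk)
  -- basic quantities
  set L := Real.log ((k:ℝ)/δ) with hL
  set R := c₀ * L * Real.sqrt (k:ℝ) with hR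
  set s := Real.sqrt (k:ℝ) with hs
  have hk0 : (0:ℝ) < (k:ℝ) := by positivity
  have hk4' : (4:ℝ) ≤ (k:ℝ) := by exact_mod_cast hk4
  have hs0 : 0 < s := Real.sqrt_pos.mpr hk0
  have hss : s * s = (k:ℝ) := Real.mul_self_sqrt hk0.le
  have hR1 : 1 ≤ R := by
    calc (1:ℝ) = 1 * 1 := by ring
      _ ≤ (c₀ * s) * L := mul_le_mul hcs hL1 one_pos.le (by positivity)
      _ = R := by rw [hR]; ring
  have hR0 : 0 < R := lt_of_lt_of_le one_pos hR1
  have hRδ : 1 ≤ R / δ := by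
    rw [le_div_iff₀ hδ0]; nlinarith
  have hlogRδ : 0 ≤ Real.log (R / δ) := Real.log_nonneg hRδ
  have hsmall' : c₀ * L * L / s ≤ 1/75 := by
    calc c₀ * L * L / s = c₀ * L^2 / s := by ring_nf
      _ ≤ 1/75 := hsmall
  have hL0 : 0 < L := lt_of_lt_of_le one_pos hL1
  have hRk : R / (k:ℝ) ≤ 1/75 := by
    have h1 : R / (k:ℝ) = c₀ * L / s := by
      rw [hR, ← hss]; field_simp
    rw [h1]
    calc c₀ * L / s ≤ c₀ * L * L / s := by
          rw [div_le_div_iff₀ hs0 hs0]; nlinarith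
      _ ≤ 1/75 := hsmall'
  have hRlek : R ≤ (k:ℝ) := by
    have := (div_le_iff₀ hk0).mp hRk
    nlinarith
  have hlogRk : Real.log (R/δ) ≤ L := by
    rw [hL]
    have h1 : R/δ ≤ (k:ℝ)/δ := by gcongr
    exact Real.log_le_log (div_pos hR0 hδ0) h1
  have hτD : R * Real.log (R/δ) / (k:ℝ) ≤ 1/75 := by
    calc R * Real.log (R/δ) / (k:ℝ) ≤ R * L / (k:ℝ) := by gcongr
      _ = c₀ * L * L / s := by rw [hR, ← hss]; field_simp
      _ ≤ 1/75 := hsmall'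
  set Dn := ⌊(k:ℝ)/R⌋₊ with hDn
  have hD : (Dn:ℝ) ≤ (k:ℝ)/R := Nat.floor_le (by positivity)
  -- pointwise nonnegativity
  have hτ0 : ∀ d : ℕ, 0 ≤ tauRS k R δ d := by
    intro d
    rw [tauRS]
    split_ifs with h1 h2
    · exact div_nonneg hR0.le (by positivity)
    · exact div_nonneg (mul_nonneg hR0.le hlogRδ) hk0.le
    · exact le_refl 0
  have hι0 : ∀ d : ℕ, 0 ≤ idealSoliton k d := by
    intro d
    rw [idealSoliton]
    split_ifs
    · positivity
    · apply div_nonneg zero_le_one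
      rcases Nat.eq_zero_or_pos d with h | h
      · subst h; norm_num
      · have h1 : (1:ℝ) ≤ (d:ℝ) := by exact_mod_cast h
        nlinarith
  -- tau sum bound
  have hτle : ∀ d ∈ Finset.Icc 1 k, tauRS k R δ d ≤
      (if d < Dn then R/(k:ℝ) else 0) + (if d = Dn then R * Real.log (R/δ)/(k:ℝ) else 0) := by
    intro d hd
    rw [tauRS, ← hDn]
    by_cases h1 : d < Dn
    · rw [if_pos h1, if_pos h1, if_neg (Nat.ne_of_lt h1), add_zero]
      simp only [Finset.mem_Icc] at hd
      have hd1 : (1:ℝ) ≤ (d:ℝ) := by exact_mod_cast hd.1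
      have hdk : (0:ℝ) < (d:ℝ)*(k:ℝ) := by nlinarith
      rw [div_le_div_iff₀ hdk hk0]
      nlinarith [mul_nonneg hR0.le (mul_nonneg (sub_nonneg.mpr hd1) hk0.le)]
    · rw [if_neg h1, if_neg h1, zero_add]
  have hτsum : ∑ d ∈ Finset.Icc 1 k, tauRS k R δ d ≤ 1 + 1/75 := by
    calc ∑ d ∈ Finset.Icc 1 k, tauRS k R δ d
        ≤ ∑ d ∈ Finset.Icc 1 k, ((if d < Dn then R/(k:ℝ) else 0)
            + (if d = Dn then R * Real.log (R/δ)/(k:ℝ) else 0)) := Finset.sum_le_sum hτle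
      _ = (∑ d ∈ Finset.Icc 1 k, if d < Dn then R/(k:ℝ) else 0)
            + ∑ d ∈ Finset.Icc 1 k, if d = Dn then R * Real.log (R/δ)/(k:ℝ) else 0 :=
          Finset.sum_add_distrib
      _ ≤ 1 + 1/75 := by
          have hA : (∑ d ∈ Finset.Icc 1 k, if d < Dn then R/(k:ℝ) else 0) ≤ 1 := by
            rw [Finset.sum_ite, Finset.sum_const, Finset.sum_const_zero, add_zero]
            have hcard : ((Finset.Icc 1 k).filter (· < Dn)).card ≤ Dn := by
              calc ((Finset.Icc 1 k).filter (· < Dn)).card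
                  ≤ (Finset.range Dn).card := by
                    apply Finset.card_le_card
                    intro x hx
                    simp only [Finset.mem_filter] at hx
                    simpa using hx.2
                _ = Dn := Finset.card_range _
            calc (((Finset.Icc 1 k).filter (· < Dn)).card : ℕ) • (R/(k:ℝ))
                ≤ Dn • (R/(k:ℝ)) := nsmul_le_nsmul_left (by positivity) hcard
              _ = (Dn:ℝ) * (R/(k:ℝ)) := nsmul_eq_mul _ _
              _ ≤ ((k:ℝ)/R) * (R/(k:ℝ)) := by
                  apply mul_le_mul_of_nonneg_right hD (by positivity)
              _ = 1 := by field_simp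
          have hB : (∑ d ∈ Finset.Icc 1 k, if d = Dn then R * Real.log (R/δ)/(k:ℝ) else 0)
              ≤ 1/75 := by
            rw [Finset.sum_ite_eq']
            split_ifs
            · exact hτD
            · norm_num
          linarith
  -- beta bounds
  have hβeq : betaRS k R δ = (∑ d ∈ Finset.Icc 1 k, tauRS k R δ d) + 1 := by
    rw [betaRS, Finset.sum_add_distrib, idealSoliton_sum (show 1 ≤ k by omega)]
  have hτnn : 0 ≤ ∑ d ∈ Finset.Icc 1 k, tauRS k R δ d :=
    Finset.sum_nonneg fun d _ => hτ0 d
  have hβ1 : 1 ≤ betaRS k R δ := by rw [hβeq]; linarith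
  have hβ3 : betaRS k R δ ≤ 3 := by rw [hβeq]; linarith
  have hβ0 : (0:ℝ) < betaRS k R δ := lt_of_lt_of_le one_pos hβ1
  -- summands nonneg
  have hnn : ∀ d ∈ Finset.Icc 1 k,
      0 ≤ (d:ℝ) * (1 - (d:ℝ)/(k:ℝ))^(k-1) * robustSoliton k R δ d := by
    intro d hd
    simp only [Finset.mem_Icc] at hd
    have h1 : (0:ℝ) ≤ 1 - (d:ℝ)/(k:ℝ) := by
      rw [sub_nonneg, div_le_one hk0]
      exact_mod_cast hd.2
    have h2 : 0 ≤ robustSoliton k R δ d :=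
      div_nonneg (add_nonneg (hτ0 d) (hι0 d)) hβ0.le
    positivity
  have h2mem : 2 ∈ Finset.Icc 1 k := by
    simp only [Finset.mem_Icc]; omega
  -- the degree-2 term
  have hι2 : idealSoliton k 2 = 1/2 := by rw [idealSoliton]; norm_num
  have hx0 : (0:ℝ) < 1 - 2/(k:ℝ) := by
    rw [sub_pos, div_lt_one hk0]; linarith
  have hkm2 : (0:ℝ) < (k:ℝ) - 2 := by linarith
  have hlogx : -(2/((k:ℝ)-2)) ≤ Real.log (1 - 2/(k:ℝ)) := by
    have h := Real.one_sub_inv_le_log_of_pos hx0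
    have e : 1 - (1 - 2/(k:ℝ))⁻¹ = -(2/((k:ℝ)-2)) := by
      rw [inv_eq_one_div]
      field_simp
      ring
    rw [e] at h
    exact h
  have hcast : ((k-1:ℕ):ℝ) = (k:ℝ) - 1 := by
    rw [Nat.cast_sub (by omega : 1 ≤ k)]; norm_num
  have hmul : (-4:ℝ) ≤ ((k-1:ℕ):ℝ) * Real.log (1 - 2/(k:ℝ)) := by
    rw [hcast]
    have step1 : ((k:ℝ)-1) * (-(2/((k:ℝ)-2))) ≤ ((k:ℝ)-1) * Real.log (1 - 2/(k:ℝ)) :=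
      mul_le_mul_of_nonneg_left hlogx (by linarith)
    have step0 : (-4:ℝ) ≤ ((k:ℝ)-1) * (-(2/((k:ℝ)-2))) := by
      have e : ((k:ℝ)-1) * (-(2/((k:ℝ)-2))) = -((((k:ℝ)-1) * 2)/((k:ℝ)-2)) := by ring
      rw [e, neg_le_neg_iff, div_le_iff₀ hkm2]
      linarith
    linarith
  have hP : Real.exp (-4) ≤ (1 - 2/(k:ℝ))^(k-1) := by
    have e : (1 - 2/(k:ℝ))^(k-1) = Real.exp (((k-1:ℕ):ℝ) * Real.log (1 - 2/(k:ℝ))) := by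
      rw [Real.exp_nat_mul, Real.exp_log hx0]
    rw [e]
    exact Real.exp_le_exp.mpr hmul
  have hP0 : (0:ℝ) ≤ (1 - 2/(k:ℝ))^(k-1) := by positivity
  have hexp100 : (1:ℝ)/100 ≤ Real.exp (-4) := by
    rw [Real.exp_neg]
    have e : Real.exp 1 ^ 4 = Real.exp 4 := by
      rw [Real.exp_one_pow]
      norm_num
    have h4 : Real.exp 4 ≤ 100 := by
      rw [← e]
      calc Real.exp 1 ^ 4 ≤ 2.7182818286 ^ 4 :=
            pow_le_pow_left₀ (Real.exp_pos 1).le Real.exp_one_lt_d9.le 4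
        _ ≤ 100 := by norm_num
    calc (1:ℝ)/100 ≤ 1/Real.exp 4 := one_div_le_one_div_of_le (Real.exp_pos 4) h4
      _ = (Real.exp 4)⁻¹ := one_div _
  have hnum : 1/2 ≤ tauRS k R δ 2 + idealSoliton k 2 := by
    rw [hι2]; linarith [hτ0 2]
  have hf2 : Real.exp (-4) / 3 ≤ (2:ℝ) * (1 - 2/(k:ℝ))^(k-1) * robustSoliton k R δ 2 := by
    have h1 : Real.exp (-4)/3 ≤ (1 - 2/(k:ℝ))^(k-1) / betaRS k R δ :=
      div_le_div₀ hP0 hP hβ0 hβ3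
    have h2 : (1 - 2/(k:ℝ))^(k-1) / betaRS k R δ
        = 2 * (1 - 2/(k:ℝ))^(k-1) * ((1/2) / betaRS k R δ) := by ring
    have h3 : 2 * (1 - 2/(k:ℝ))^(k-1) * ((1/2) / betaRS k R δ)
        ≤ 2 * (1 - 2/(k:ℝ))^(k-1) * robustSoliton k R δ 2 := by
      apply mul_le_mul_of_nonneg_left ?_ (by positivity)
      rw [robustSoliton]
      exact (div_le_div_iff_of_pos_right hβ0).mpr hnum
    linarith [h2 ▸ h1]
  have hfin : R / (4*(k:ℝ)) ≤ Real.exp (-4)/3 := by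
    have e : R/(4*(k:ℝ)) = (R/(k:ℝ))/4 := by
      rw [div_div, mul_comm]
    rw [e]
    calc (R/(k:ℝ))/4 ≤ (1/75)/4 := by linarith
      _ ≤ (1/100)/3 := by norm_num
      _ ≤ Real.exp (-4)/3 := by linarith
  have h2term : (2:ℝ) * (1 - 2/(k:ℝ))^(k-1) * robustSoliton k R δ 2
      ≤ ∑ d ∈ Finset.Icc 1 k, (d:ℝ) * (1 - (d:ℝ)/(k:ℝ))^(k-1) * robustSoliton k R δ d := by
    have := Finset.single_le_sum hnn h2mem
    simpa using this
  exact le_trans hfin (le_trans hf2 h2term)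
end
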